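/- A set of vertices S of a graph G is t-convex if and only if S is m-convex and P3-convex. -/

import Mathlib

open Set

variable {V : Type*}

/-- `p` is a triangle path: a path with no edge joining vertices at index
distance greater than 2 along the path. -/
def TPath (G : SimpleGraph V) {u v : V} (p : G.Walk u v) : Prop :=
  p.IsPath ∧ ∀ i j : ℕ, i + 2 < j →
    ∀ (hi : i < p.support.length) (hj : j < p.support.length),
      ¬ G.Adj (p.support.get ⟨i, hi⟩) (p.support.get ⟨j, hj⟩)

/-- `p` is a monophonic (induced) path: a path with no edge joining vertices at
index distance greater than 1 along the path. -/
def MPath (G : SimpleGraph V) {u v : V} (p : G.Walk u v) : Prop :=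
  p.IsPath ∧ ∀ i j : ℕ, i + 1 < j →
    ∀ (hi : i < p.support.length) (hj : j < p.support.length),
      ¬ G.Adj (p.support.get ⟨i, hi⟩) (p.support.get ⟨j, hj⟩)

/-- `p` is a geodesic (shortest path). -/
def GPath (G : SimpleGraph V) {u v : V} (p : G.Walk u v) : Prop :=
  p.IsPath ∧ ∀ q : G.Walk u v, p.length ≤ q.length

/-- `S` is convex in the triangle path convexity. -/
def TConvex (G : SimpleGraph V) (S : Set V) : Prop :=
  ∀ ⦃u v : V⦄, u ∈ S → v ∈ S → ∀ p : G.Walk u v, TPath G p → ∀ w ∈ p.support, w ∈ S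

/-- `S` is convex in the monophonic convexity. -/
def MConvex (G : SimpleGraph V) (S : Set V) : Prop :=
  ∀ ⦃u v : V⦄, u ∈ S → v ∈ S → ∀ p : G.Walk u v, MPath G p → ∀ w ∈ p.support, w ∈ S

/-- `S` is convex in the geodetic convexity. -/
def GConvex (G : SimpleGraph V) (S : Set V) : Prop :=
  ∀ ⦃u v : V⦄, u ∈ S → v ∈ S → ∀ p : G.Walk u v, GPath G p → ∀ w ∈ p.support, w ∈ S

/-- `S` is `P₃`-convex: no vertex outside `S` has two neighbours in `S`. -/
def P3Convex (G : SimpleGraph V) (S : Set V) : Prop :=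
  ∀ w ∉ S, ∀ a ∈ S, ∀ b ∈ S, G.Adj w a → G.Adj w b → a = b

/-- The triangle path interval of `S`. -/
def TInterval (G : SimpleGraph V) (S : Set V) : Set V :=
  S ∪ {w | ∃ u ∈ S, ∃ v ∈ S, ∃ p : G.Walk u v, TPath G p ∧ w ∈ p.support}

/-- The monophonic interval of `S`. -/
def MInterval (G : SimpleGraph V) (S : Set V) : Set V :=
  S ∪ {w | ∃ u ∈ S, ∃ v ∈ S, ∃ p : G.Walk u v, MPath G p ∧ w ∈ p.support}

/-- The geodetic interval of `S`. -/
def GInterval (G : SimpleGraph V) (S : Set V) : Set V :=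
  S ∪ {w | ∃ u ∈ S, ∃ v ∈ S, ∃ p : G.Walk u v, GPath G p ∧ w ∈ p.support}

/-- The `P₃`-interval of `S`: `S` together with the vertices having at least two
neighbours in `S`. -/
def P3Interval (G : SimpleGraph V) (S : Set V) : Set V :=
  S ∪ {w | w ∉ S ∧ ∃ a ∈ S, ∃ b ∈ S, a ≠ b ∧ G.Adj w a ∧ G.Adj w b}

/-- The convex hull of `S` in the triangle path convexity. -/
def THull (G : SimpleGraph V) (S : Set V) : Set V :=
  ⋂₀ {C : Set V | S ⊆ C ∧ TConvex G C}

/-- The convex hull of `S` in the monophonic convexity. -/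
def MHull (G : SimpleGraph V) (S : Set V) : Set V :=
  ⋂₀ {C : Set V | S ⊆ C ∧ MConvex G C}

/-- The convex hull of `S` in the geodetic convexity. -/
def GHull (G : SimpleGraph V) (S : Set V) : Set V :=
  ⋂₀ {C : Set V | S ⊆ C ∧ GConvex G C}

/-- `K` separates the vertices `a` and `b`: both lie outside `K` and every walk
between them meets `K`. -/
def Separates (G : SimpleGraph V) (K : Set V) (a b : V) : Prop :=
  a ∉ K ∧ b ∉ K ∧ ∀ p : G.Walk a b, ∃ w ∈ p.support, w ∈ K

/-- `K` is a separator of `G`. -/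
def IsSeparator (G : SimpleGraph V) (K : Set V) : Prop :=
  ∃ a b : V, Separates G K a b

/-- `G` is prime: it has no clique separator. -/
def IsPrime (G : SimpleGraph V) : Prop :=
  ¬ ∃ C : Set V, G.IsClique C ∧ IsSeparator G C

/-- `K` is a minimal separator for `a` and `b`. -/
def IsMinSeparator (G : SimpleGraph V) (K : Set V) (a b : V) : Prop :=
  Separates G K a b ∧ ∀ K' : Set V, K' ⊂ K → ¬ Separates G K' a b

/-- `W` induces a maximal prime subgraph of `G`. -/
def IsMPSubgraph (G : SimpleGraph V) (W : Set V) : Prop :=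
  IsPrime (G.induce W) ∧ ∀ W' : Set V, W ⊆ W' → IsPrime (G.induce W') → W' = W

/-- `C` is the vertex set of a connected component of `G - S`. -/
def IsCompOf (G : SimpleGraph V) (S C : Set V) : Prop :=
  C.Nonempty ∧ C ∩ S = ∅ ∧
  (∀ x ∈ C, ∀ y ∈ C, ∃ p : G.Walk x y, ∀ w ∈ p.support, w ∈ C) ∧
  (∀ x ∈ C, ∀ y : V, y ∉ S → G.Adj x y → y ∈ C)


section Aux

variable {G : SimpleGraph V}

lemma adj_support_get {u v : V} (p : G.Walk u v) (i : ℕ) (h : i + 1 < p.support.length) :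
    G.Adj (p.support.get ⟨i, by omega⟩) (p.support.get ⟨i + 1, h⟩) :=
  (List.isChain_iff_getElem.mp p.isChain_adj_support) i (by omega)

lemma len_td {α : Type*} (l : List α) (i : ℕ) (h : i + 2 ≤ l.length) :
    (l.take (i + 1) ++ l.drop (i + 2)).length = l.length - 1 := by
  simp; omega

lemma get_td_left {α : Type*} (l : List α) {i a : ℕ} (ha : a ≤ i)
    (h : a < (l.take (i + 1) ++ l.drop (i + 2)).length) (h' : a < l.length) :
    (l.take (i + 1) ++ l.drop (i + 2)).get ⟨a, h⟩ = l.get ⟨a, h'⟩ := by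
  have h1 : a < (l.take (i + 1)).length := by simp at h ⊢; omega
  simp only [List.get_eq_getElem, List.getElem_append_left h1, List.getElem_take]

lemma get_td_right {α : Type*} (l : List α) {i a : ℕ} (ha : i < a)
    (h : a < (l.take (i + 1) ++ l.drop (i + 2)).length) (h' : a + 1 < l.length) :
    (l.take (i + 1) ++ l.drop (i + 2)).get ⟨a, h⟩ = l.get ⟨a + 1, h'⟩ := by
  have h1 : (l.take (i + 1)).length ≤ a := by simp at h ⊢; omega
  have h2 : (l.take (i + 1)).length = i + 1 := by simp at h ⊢; omega
  simp only [List.get_eq_getElem, List.getElem_append_right h1, List.getElem_drop]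
  congr 1
  omega

lemma shortcut : ∀ (i : ℕ) {u v : V} (p : G.Walk u v) (hj : i + 2 < p.support.length),
    G.Adj (p.support.get ⟨i, by omega⟩) (p.support.get ⟨i + 2, hj⟩) →
    ∃ q : G.Walk u v, q.support = p.support.take (i + 1) ++ p.support.drop (i + 2)
  | 0, u, _, .nil, hj, _ => by simp at hj
  | 0, u, _, .cons h .nil, hj, _ => by simp at hj
  | 0, u, v, @SimpleGraph.Walk.cons _ _ _ b _ h (@SimpleGraph.Walk.cons _ _ _ c _ h' r), hj, hadj => by
    have hadj' : G.Adj u c := by cases r <;> simpa using hadj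
    exact ⟨.cons hadj' r, by simp⟩
  | i + 1, u, _, .nil, hj, _ => by simp at hj
  | i + 1, u, v, .cons h r, hj, hadj => by
    have hj' : i + 2 < r.support.length := by
      simp only [SimpleGraph.Walk.support_cons, List.length_cons] at hj; omega
    have hadj' : G.Adj (r.support.get ⟨i, by omega⟩) (r.support.get ⟨i + 2, hj'⟩) := by
      exact hadj
    obtain ⟨q, hq⟩ := shortcut i r hj' hadj'
    refine ⟨.cons h q, ?_⟩
    simp only [SimpleGraph.Walk.support_cons, hq, List.take_succ_cons, List.drop_succ_cons,
      List.cons_append]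

lemma qget_left {u v : V} {p q : G.Walk u v} {i : ℕ}
    (hq : q.support = p.support.take (i + 1) ++ p.support.drop (i + 2))
    {a : ℕ} (ha : a ≤ i) (h1 : a < q.support.length) (h2 : a < p.support.length) :
    q.support.get ⟨a, h1⟩ = p.support.get ⟨a, h2⟩ := by
  rw [List.get_of_eq hq]; exact get_td_left _ ha _ _

lemma qget_right {u v : V} {p q : G.Walk u v} {i : ℕ}
    (hq : q.support = p.support.take (i + 1) ++ p.support.drop (i + 2))
    {a : ℕ} (ha : i < a) (h1 : a < q.support.length) (h2 : a + 1 < p.support.length) :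
    q.support.get ⟨a, h1⟩ = p.support.get ⟨a + 1, h2⟩ := by
  rw [List.get_of_eq hq]; exact get_td_right _ ha _ _

lemma tconvex_of_m_p3 {S0 : Set V} (hM : MConvex G S0) (hP : P3Convex G S0) : TConvex G S0 := by
  have key : ∀ n : ℕ, ∀ ⦃u v : V⦄, u ∈ S0 → v ∈ S0 → ∀ p : G.Walk u v, p.length ≤ n →
      TPath G p → ∀ w ∈ p.support, w ∈ S0 := by
    intro n
    induction n with
    | zero =>
      intro u v hu hv p hl hp w hw
      cases p with
      | nil => simp only [SimpleGraph.Walk.support_nil, List.mem_singleton] at hw; exact hw ▸ hu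
      | cons h r => simp at hl
    | succ n IH =>
      intro u v hu hv p hl hp w hw
      by_cases hml : MPath G p
      · exact hM hu hv p hml w hw
      have hch : ∃ i, ∃ h2 : i + 2 < p.support.length,
          G.Adj (p.support.get ⟨i, by omega⟩) (p.support.get ⟨i + 2, h2⟩) := by
        by_contra hc
        push_neg at hc
        refine hml ⟨hp.1, fun i j hij hi hj => ?_⟩
        rcases Nat.lt_or_ge (i + 2) j with hlt | hge
        · exact hp.2 i j hlt hi hj
        · have hji : j = i + 2 := by omega
          subst hji
          exact hc i hj
      obtain ⟨i, h2, hadj⟩ := hch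
      obtain ⟨q, hq⟩ := shortcut i p h2 hadj
      have hlen : q.support.length = p.support.length - 1 := by
        rw [hq]; exact len_td _ _ (by omega)
      have hps := SimpleGraph.Walk.length_support p
      have hqs := SimpleGraph.Walk.length_support q
      have hql : q.length ≤ n := by omega
      have hqpath : q.IsPath := by
        rw [SimpleGraph.Walk.isPath_def]
        have hd : (p.support.drop (i + 2)).Sublist (p.support.drop (i + 1)) := by
          rw [show i + 2 = (i + 1) + 1 from rfl, ← List.tail_drop]
          exact List.tail_sublist _
        have hsub : q.support.Sublist p.support := by
          rw [hq]
          conv_rhs => rw [← List.take_append_drop (i + 1) p.support]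
          exact hd.append_left _
        exact hsub.nodup hp.1.support_nodup
      have hqT : TPath G q := by
        refine ⟨hqpath, fun a b hab ha hb => ?_⟩
        by_cases hai : a ≤ i
        · by_cases hbi : b ≤ i
          · rw [qget_left hq hai ha (by omega), qget_left hq hbi hb (by omega)]
            exact hp.2 a b hab _ _
          · rw [qget_left hq hai ha (by omega),
              qget_right hq (by omega) hb (by omega)]
            exact hp.2 a (b + 1) (by omega) _ _
        · rw [qget_right hq (by omega) ha (by omega),
            qget_right hq (by omega) hb (by omega)]
          exact hp.2 (a + 1) (b + 1) (by omega) _ _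
      have hS := IH hu hv q hql hqT
      have hiq : i < q.support.length := by omega
      have hi1q : i + 1 < q.support.length := by omega
      have ha0 : p.support.get ⟨i, by omega⟩ ∈ S0 := by
        rw [← qget_left hq le_rfl hiq (by omega)]
        exact hS _ (List.get_mem _ _)
      have hb0 : p.support.get ⟨i + 2, h2⟩ ∈ S0 := by
        rw [← qget_right hq (Nat.lt_succ_self i) hi1q (by omega)]
        exact hS _ (List.get_mem _ _)
      have hmS : p.support.get ⟨i + 1, by omega⟩ ∈ S0 := by
        by_contra hm
        have hadj1 : G.Adj (p.support.get ⟨i + 1, by omega⟩) (p.support.get ⟨i, by omega⟩) :=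
          (adj_support_get p i (by omega)).symm
        have hadj2 : G.Adj (p.support.get ⟨i + 1, by omega⟩) (p.support.get ⟨i + 2, h2⟩) :=
          adj_support_get p (i + 1) h2
        have heq := hP _ hm _ ha0 _ hb0 hadj1 hadj2
        have := (hp.1.support_nodup.get_inj_iff).mp heq
        simp only [Fin.mk.injEq] at this
        omega
      rcases List.mem_iff_get.mp hw with ⟨⟨a, ha⟩, rfl⟩
      rcases lt_trichotomy a (i + 1) with hlt | heq | hgt
      · have haq : a < q.support.length := by omega
        rw [← qget_left hq (by omega) haq ha]
        exact hS _ (List.get_mem _ _)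
      · have : (⟨a, ha⟩ : Fin p.support.length) = ⟨i + 1, by omega⟩ := by
          simp only [Fin.mk.injEq]; omega
        rw [this]
        exact hmS
      · have haq : a - 1 < q.support.length := by omega
        have : p.support.get ⟨a, ha⟩ = q.support.get ⟨a - 1, haq⟩ := by
          rw [qget_right hq (by omega) haq (by omega)]
          congr 1
          simp only [Fin.mk.injEq]
          omega
        rw [this]
        exact hS _ (List.get_mem _ _)
  intro u v hu hv p hp w hw
  exact key p.length hu hv p le_rfl hp w hw

end Aux

theorem stmt_1 [Fintype V] (G : SimpleGraph V) (S : Set V) :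
    TConvex G S ↔ MConvex G S ∧ P3Convex G S := by
  constructor
  · intro hT
    constructor
    · intro u v hu hv p hp w hw
      exact hT hu hv p ⟨hp.1, fun i j hij hi hj => hp.2 i j (by omega) hi hj⟩ w hw
    · intro w hw a ha b hb hwa hwb
      by_contra hab
      apply hw
      have hpath : (SimpleGraph.Walk.cons hwa.symm
          (SimpleGraph.Walk.cons hwb SimpleGraph.Walk.nil) : G.Walk a b).IsPath := by
        simp [SimpleGraph.Walk.isPath_def, hwa.ne', hwb.ne, hab]
      refine hT ha hb _ ⟨hpath, fun i j hij hi hj => ?_⟩ w ?_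
      · exfalso
        simp [SimpleGraph.Walk.support_cons, SimpleGraph.Walk.support_nil] at hj
        omega
      · simp
  · rintro ⟨hM, hP⟩
    exact tconvex_of_m_p3 hM hP
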